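/- arXiv:2312.16505 — 2 statements merged into one kernel-verified Lean document; each statement's English description precedes it below -/
import Mathlib

section
/- Let A, M, F be complex n×n matrices with M and F invertible, and let Q be the 2n×2n block matrix Q = [[0, I - M⁻¹A], [I - F⁻¹A, 0]]. If ρ(|Q|) < 1, then ρ(|I - F⁻¹(M + F - A)M⁻¹A|) < 1. -/
open Matrix

/-- Spectral radius of a real square matrix: the supremum of the moduli of its
complex eigenvalues. -/
noncomputable def specRad {m : Type*} [Fintype m] [DecidableEq m]
    (A : Matrix m m ℝ) : ℝ :=
  sSup ((fun z : ℂ => ‖z‖) '' spectrum ℂ (A.map Complex.ofReal))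

/-- Entrywise absolute value (modulus) of a complex matrix. -/
noncomputable def cabs {m l : Type*} (A : Matrix m l ℂ) : Matrix m l ℝ :=
  fun i j => ‖A i j‖

open Filter
open scoped ENNReal Topology

section aux
variable {m : Type*} [Fintype m] [DecidableEq m]

lemma spectrum_eq_clm (X : Matrix m m ℂ) :
    spectrum ℂ X = spectrum ℂ (Matrix.toEuclideanCLM (𝕜 := ℂ) (n := m) X) :=
  (AlgEquiv.spectrum_eq (Matrix.toEuclideanCLM (𝕜 := ℂ) (n := m)) X).symm

lemma bddAbove_abs_spectrum (X : Matrix m m ℂ) :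
    BddAbove ((fun z : ℂ => ‖z‖) '' spectrum ℂ X) := by
  rw [spectrum_eq_clm]
  exact ((spectrum.isCompact _).image continuous_norm).bddAbove

lemma specRad_nonneg (A : Matrix m m ℝ) : 0 ≤ specRad A :=
  Real.sSup_nonneg (by rintro x ⟨z, _, rfl⟩; exact norm_nonneg z)

lemma specRad_le (A : Matrix m m ℝ) {r : ℝ} (hr : 0 ≤ r)
    (h : ∀ z ∈ spectrum ℂ (A.map Complex.ofReal), ‖z‖ ≤ r) :
    specRad A ≤ r :=
  Real.sSup_le (by rintro x ⟨z, hz, rfl⟩; exact h z hz) hr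

end aux

section subinv
variable {m : Type*} [Fintype m] [DecidableEq m]

lemma pow_entry_nonneg {W : Matrix m m ℝ} (hW : ∀ i j, 0 ≤ W i j) :
    ∀ k i j, 0 ≤ (W ^ k) i j := by
  intro k
  induction k with
  | zero => intro i j; by_cases h : i = j <;> simp [pow_zero, Matrix.one_apply, h]
  | succ k ih =>
    intro i j
    rw [pow_succ, Matrix.mul_apply]
    exact Finset.sum_nonneg fun l _ => mul_nonneg (ih i l) (hW l j)

lemma mulVec_mono {W : Matrix m m ℝ} (hW : ∀ i j, 0 ≤ W i j) {u v : m → ℝ}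
    (h : ∀ j, u j ≤ v j) (i : m) : (W *ᵥ u) i ≤ (W *ᵥ v) i :=
  Finset.sum_le_sum fun j _ => mul_le_mul_of_nonneg_left (h j) (hW i j)

lemma subinv_pow {W : Matrix m m ℝ} (hW : ∀ i j, 0 ≤ W i j) {y : m → ℝ}
    {t : ℝ} (ht : 0 ≤ t) (h : ∀ i, t * y i ≤ (W *ᵥ y) i) :
    ∀ k i, t ^ k * y i ≤ ((W ^ k) *ᵥ y) i := by
  intro k
  induction k with
  | zero => intro i; simp
  | succ k ih =>
    intro i
    have h1 : t ^ (k + 1) * y i ≤ t * ((W ^ k) *ᵥ y) i := by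
      calc t ^ (k+1) * y i = t * (t ^ k * y i) := by ring
        _ ≤ t * ((W ^ k) *ᵥ y) i := mul_le_mul_of_nonneg_left (ih i) ht
    have h2 : t * ((W ^ k) *ᵥ y) i = ((W ^ k) *ᵥ (t • y)) i := by
      rw [Matrix.mulVec_smul]; simp
    have h3 : ((W ^ k) *ᵥ (t • y)) i ≤ ((W ^ k) *ᵥ (W *ᵥ y)) i :=
      mulVec_mono (pow_entry_nonneg hW k) (fun j => by simpa using h j) i
    have h4 : ((W ^ k) *ᵥ (W *ᵥ y)) i = ((W ^ (k+1)) *ᵥ y) i := by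
      rw [Matrix.mulVec_mulVec, ← pow_succ]
    linarith

lemma coord_le_norm (v : EuclideanSpace ℂ m) (i : m) : ‖v i‖ ≤ ‖v‖ := by
  rw [EuclideanSpace.norm_eq]
  have h1 : ‖v i‖ = Real.sqrt (‖v i‖ ^ 2) := by
    rw [Real.sqrt_sq (norm_nonneg _)]
  rw [h1]
  apply Real.sqrt_le_sqrt
  exact Finset.single_le_sum (fun j _ => sq_nonneg ‖v j‖) (Finset.mem_univ i)

lemma subinv {W : Matrix m m ℝ} (hW : ∀ i j, 0 ≤ W i j) {y : m → ℝ}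
    (hy : ∀ i, 0 ≤ y i) {i0 : m} (hy0 : 0 < y i0) {t : ℝ} (ht : 0 ≤ t)
    (h : ∀ i, t * y i ≤ (W *ᵥ y) i) : t ≤ specRad W := by
  classical
  set T := Matrix.toEuclideanCLM (𝕜 := ℂ) (n := m) (W.map Complex.ofReal) with hT
  have hWk : ∀ k : ℕ, (W.map Complex.ofReal) ^ k = (W ^ k).map Complex.ofReal := by
    intro k
    have := RingHom.map_pow (Complex.ofRealHom.mapMatrix) W k
    exact this.symm
  have hTk : ∀ k : ℕ, T ^ k = Matrix.toEuclideanCLM (𝕜 := ℂ) ((W ^ k).map Complex.ofReal) := by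
    intro k
    rw [hT, ← map_pow, hWk]
  set x : EuclideanSpace ℂ m := (WithLp.equiv 2 (m → ℂ)).symm (fun i => (y i : ℂ)) with hx
  have hx0 : x ≠ 0 := by
    intro hxx
    have : (y i0 : ℂ) = 0 := by
      have := congrFun (congrArg (WithLp.equiv 2 (m → ℂ)) hxx) i0
      simpa [hx] using this
    simp only [Complex.ofReal_eq_zero] at this
    exact hy0.ne' this
  have hxpos : 0 < ‖x‖ := norm_pos_iff.mpr hx0
  have hcoord : ∀ k : ℕ, ((T ^ k) x) i0 = ((W ^ k *ᵥ y) i0 : ℂ) := by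
    intro k
    rw [hTk k, hx]
    show Matrix.toLin' ((W ^ k).map Complex.ofReal) (fun i => (y i : ℂ)) i0 = _
    have : Matrix.toLin' ((W ^ k).map Complex.ofReal) (fun i => (y i : ℂ))
        = fun i => ((W ^ k *ᵥ y) i : ℂ) := by
      funext i
      simp only [Matrix.toLin'_apply, Matrix.mulVec, dotProduct, Matrix.map_apply]
      push_cast
      rfl
    rw [this]
  have hnorm : ∀ k : ℕ, t ^ k * y i0 ≤ ‖T ^ k‖ * ‖x‖ := by
    intro k
    have h1 : t ^ k * y i0 ≤ (W ^ k *ᵥ y) i0 := subinv_pow hW ht h k i0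
    have h2 : (W ^ k *ᵥ y) i0 ≤ ‖((T ^ k) x) i0‖ := by
      rw [hcoord k, Complex.norm_real]
      exact le_abs_self _
    have h3 : ‖((T ^ k) x) i0‖ ≤ ‖(T ^ k) x‖ := coord_le_norm _ i0
    have h4 : ‖(T ^ k) x‖ ≤ ‖T ^ k‖ * ‖x‖ := (T ^ k).le_opNorm x
    linarith
  set c : ℝ := y i0 / ‖x‖ with hc
  have hcpos : 0 < c := div_pos hy0 hxpos
  have hTnorm : ∀ k : ℕ, t ^ k * c ≤ ‖T ^ k‖ := by
    intro k
    rw [hc, ← mul_div_assoc, div_le_iff₀ hxpos]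
    exact hnorm k
  have hG := spectrum.pow_norm_pow_one_div_tendsto_nhds_spectralRadius T
  set g : ℕ → ℝ≥0∞ := fun k => ENNReal.ofReal (t * Real.exp (Real.log c * (1 / (k : ℝ)))) with hg
  have hgt : Filter.Tendsto g Filter.atTop (nhds (ENNReal.ofReal t)) := by
    have hcont : Continuous fun r : ℝ => ENNReal.ofReal (t * Real.exp (Real.log c * r)) := by
      apply ENNReal.continuous_ofReal.comp
      exact continuous_const.mul (Real.continuous_exp.comp (continuous_const.mul continuous_id))
    have := (hcont.tendsto 0).comp tendsto_one_div_atTop_nhds_zero_nat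
    simpa [hg, Function.comp_def] using this
  have hle : ∀ᶠ k : ℕ in Filter.atTop, g k ≤ ENNReal.ofReal (‖T ^ k‖ ^ (1 / (k : ℝ))) := by
    filter_upwards [Filter.eventually_ge_atTop 1] with k hk
    apply ENNReal.ofReal_le_ofReal
    have hk0 : (k : ℝ) ≠ 0 := Nat.cast_ne_zero.mpr (by omega)
    have hinv : 0 ≤ 1 / (k : ℝ) := by positivity
    have heq : t * Real.exp (Real.log c * (1 / (k : ℝ))) = (t ^ k * c) ^ (1 / (k : ℝ)) := by
      rw [Real.mul_rpow (pow_nonneg ht k) hcpos.le,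
        ← Real.rpow_natCast t k, ← Real.rpow_mul ht]
      have hkk : (k : ℝ) * (1 / (k : ℝ)) = 1 := by field_simp
      rw [hkk, Real.rpow_one, Real.rpow_def_of_pos hcpos, mul_one_div]
    rw [heq]
    exact Real.rpow_le_rpow (mul_nonneg (pow_nonneg ht k) hcpos.le) (hTnorm k) hinv
  have hfinal : ENNReal.ofReal t ≤ spectralRadius ℂ T := le_of_tendsto_of_tendsto hgt hG hle
  have hspec : spectralRadius ℂ T ≤ ENNReal.ofReal (specRad W) := by
    rw [spectralRadius]
    apply iSup₂_le
    intro z hz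
    have hzz : z ∈ spectrum ℂ ((W.map Complex.ofReal)) := by
      rwa [spectrum_eq_clm]
    have h1 : ‖z‖ ≤ specRad W :=
      le_csSup (bddAbove_abs_spectrum _) ⟨z, hzz, rfl⟩
    calc (‖z‖₊ : ℝ≥0∞) = ENNReal.ofReal ‖z‖ := (ofReal_norm z).symm
      _ ≤ ENNReal.ofReal (specRad W) := ENNReal.ofReal_le_ofReal h1
  exact (ENNReal.ofReal_le_ofReal_iff (specRad_nonneg W)).mp (hfinal.trans hspec)

end subinv

section main
variable {m : Type*} [Fintype m] [DecidableEq m]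

lemma cabs_nonneg' (A : Matrix m m ℂ) (i j : m) : 0 ≤ cabs A i j :=
  norm_nonneg _

lemma cabs_mul_le' (Cm Bm : Matrix m m ℂ) (i j : m) :
    cabs (Cm * Bm) i j ≤ (cabs Cm * cabs Bm) i j := by
  simp only [cabs, Matrix.mul_apply]
  calc ‖∑ k, Cm i k * Bm k j‖ ≤ ∑ k, ‖Cm i k * Bm k j‖ :=
        norm_sum_le _ _
    _ = ∑ k, ‖Cm i k‖ * ‖Bm k j‖ := by
        simp [_root_.map_mul]

lemma cabs_fromBlocks' (Bm Cm : Matrix m m ℂ) :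
    cabs (Matrix.fromBlocks 0 Bm Cm 0)
      = Matrix.fromBlocks 0 (cabs Bm) (cabs Cm) 0 := by
  ext i j
  cases i <;> cases j <;> simp [cabs, Matrix.fromBlocks]
end main


lemma exists_eigvec' {m : Type*} [Fintype m] [DecidableEq m] (X : Matrix m m ℂ)
    {z : ℂ} (hz : z ∈ spectrum ℂ X) : ∃ x : m → ℂ, x ≠ 0 ∧ X *ᵥ x = z • x := by
  set f : Module.End ℂ (m → ℂ) := Matrix.toLinAlgEquiv' X with hf
  have h1 : z ∈ spectrum ℂ f := by
    rw [hf]; rwa [AlgEquiv.spectrum_eq]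
  have h2 : f.HasEigenvalue z := Module.End.HasEigenvalue.of_mem_spectrum h1
  obtain ⟨x, hx⟩ := h2.exists_hasEigenvector
  exact ⟨x, hx.right, by simpa [hf, Matrix.toLinAlgEquiv'_apply] using hx.apply_eq_smul⟩

lemma abs_spectrum_le' {m : Type*} [Fintype m] [DecidableEq m] (Bm Cm : Matrix m m ℂ)
    {z : ℂ} (hz : z ∈ spectrum ℂ ((cabs (Cm * Bm)).map Complex.ofReal)) :
    ‖z‖ ≤ specRad (cabs (Matrix.fromBlocks 0 Bm Cm 0)) ^ 2 := by
  classical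
  obtain ⟨x, hx0, hx⟩ := exists_eigvec' _ hz
  set y : m → ℝ := fun i => ‖x i‖ with hy
  have hynn : ∀ i, 0 ≤ y i := fun i => norm_nonneg _
  obtain ⟨i0, hi0⟩ := Function.ne_iff.mp hx0
  have hyi0 : 0 < y i0 := by
    simpa [hy] using norm_pos_iff.mpr (by simpa using hi0)
  set t : ℝ := ‖z‖ with htdef
  have ht : 0 ≤ t := norm_nonneg _
  have h1 : ∀ i, t * y i ≤ ((cabs Cm * cabs Bm) *ᵥ y) i := by
    intro i
    have e1 : t * y i = ‖((cabs (Cm * Bm)).map Complex.ofReal *ᵥ x) i‖ := by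
      rw [hx]
      simp [hy, htdef, _root_.map_mul]
    have e2 : ‖(((cabs (Cm * Bm)).map Complex.ofReal) *ᵥ x) i‖
        ≤ ((cabs (Cm * Bm)) *ᵥ y) i := by
      simp only [Matrix.mulVec, dotProduct, Matrix.map_apply]
      calc ‖∑ j, (cabs (Cm * Bm) i j : ℂ) * x j‖
          ≤ ∑ j, ‖(cabs (Cm * Bm) i j : ℂ) * x j‖ := norm_sum_le _ _
        _ = ∑ j, cabs (Cm * Bm) i j * y j := by
            apply Finset.sum_congr rfl
            intro j _
            rw [norm_mul, Complex.norm_real, Real.norm_eq_abs, abs_of_nonneg (cabs_nonneg' _ i j)]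
        _ = ((cabs (Cm * Bm)) *ᵥ y) i := rfl
    have e3 : ((cabs (Cm * Bm)) *ᵥ y) i ≤ ((cabs Cm * cabs Bm) *ᵥ y) i :=
      Finset.sum_le_sum fun j _ =>
        mul_le_mul_of_nonneg_right (cabs_mul_le' Cm Bm i j) (hynn j)
    rw [e1]
    exact e2.trans e3
  rcases eq_or_lt_of_le ht with h0 | htpos
  · rw [← h0]
    positivity
  · set s : ℝ := Real.sqrt t with hs
    have hspos : 0 < s := Real.sqrt_pos.mpr htpos
    have hss : s * s = t := Real.mul_self_sqrt ht
    set W : Matrix (m ⊕ m) (m ⊕ m) ℝ := cabs (Matrix.fromBlocks 0 Bm Cm 0) with hWdef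
    have hWb : W = Matrix.fromBlocks 0 (cabs Bm) (cabs Cm) 0 := cabs_fromBlocks' Bm Cm
    have hWnn : ∀ i j, 0 ≤ W i j := fun i j => norm_nonneg _
    set u : m ⊕ m → ℝ := Sum.elim (fun i => (cabs Bm *ᵥ y) i) (fun i => s * y i) with hu
    have hunn : ∀ i, 0 ≤ u i := by
      rintro (i | i)
      · exact Finset.sum_nonneg fun j _ => mul_nonneg (cabs_nonneg' _ _ _) (hynn j)
      · exact mul_nonneg hspos.le (hynn i)
    have hui0 : 0 < u (Sum.inr i0) := mul_pos hspos hyi0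
    have hsub : ∀ i, s * u i ≤ (W *ᵥ u) i := by
      have hmv : W *ᵥ u = Sum.elim
          ((0 : Matrix m m ℝ) *ᵥ (fun i => (cabs Bm *ᵥ y) i) + cabs Bm *ᵥ (fun i => s * y i))
          (cabs Cm *ᵥ (fun i => (cabs Bm *ᵥ y) i) + (0 : Matrix m m ℝ) *ᵥ (fun i => s * y i)) := by
        rw [hWb, hu]
        exact Matrix.fromBlocks_mulVec _ _ _ _ _
      rintro (i | i) <;> rw [hmv]
      · simp only [Sum.elim_inl, Pi.add_apply, Matrix.zero_mulVec, Pi.zero_apply, zero_add, hu]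
        have hsy : (fun j => s * y j) = s • y := by funext j; simp
        rw [hsy, Matrix.mulVec_smul]
        simp
      · simp only [Sum.elim_inr, Pi.add_apply, Matrix.zero_mulVec, Pi.zero_apply, add_zero, hu]
        have hcb : cabs Cm *ᵥ (fun i => (cabs Bm *ᵥ y) i) = (cabs Cm * cabs Bm) *ᵥ y := by
          rw [← Matrix.mulVec_mulVec]
        rw [hcb]
        calc s * (s * y i) = t * y i := by rw [← mul_assoc, hss]
          _ ≤ ((cabs Cm * cabs Bm) *ᵥ y) i := h1 i
    have hfin : s ≤ specRad W := subinv hWnn hunn hui0 hspos.le hsub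
    calc t = s * s := hss.symm
      _ ≤ specRad W * specRad W := mul_self_le_mul_self hspos.le hfin
      _ = specRad W ^ 2 := (sq _).symm

theorem stmt4 {n : ℕ} (A M F : Matrix (Fin n) (Fin n) ℂ)
    (hM : IsUnit M) (hF : IsUnit F)
    (hQ : specRad (cabs (Matrix.fromBlocks 0 (1 - M⁻¹ * A) (1 - F⁻¹ * A) 0)) < 1) :
    specRad (cabs (1 - F⁻¹ * (M + F - A) * (M⁻¹ * A))) < 1 := by
  have hMM : M * M⁻¹ = 1 := mul_nonsing_inv M ((Matrix.isUnit_iff_isUnit_det M).mp hM)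
  have hFF : F⁻¹ * F = 1 := nonsing_inv_mul F ((Matrix.isUnit_iff_isUnit_det F).mp hF)
  have halg : 1 - F⁻¹ * (M + F - A) * (M⁻¹ * A) = (1 - F⁻¹ * A) * (1 - M⁻¹ * A) := by
    have h1 : F⁻¹ * (M + F - A) * (M⁻¹ * A) = F⁻¹ * ((M + F - A) * M⁻¹) * A := by
      noncomm_ring
    have h2 : (M + F - A) * M⁻¹ = 1 + F * M⁻¹ - A * M⁻¹ := by
      rw [sub_mul, add_mul, hMM]
    have h3 : F⁻¹ * (1 + F * M⁻¹ - A * M⁻¹) * A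
        = F⁻¹ * A + M⁻¹ * A - F⁻¹ * (A * M⁻¹) * A := by
      rw [mul_sub, mul_add, mul_one, ← mul_assoc F⁻¹ F M⁻¹, hFF, one_mul]
      noncomm_ring
    rw [h1, h2, h3]
    noncomm_ring
  rw [halg]
  have h0 : 0 ≤ specRad (cabs (Matrix.fromBlocks 0 (1 - M⁻¹ * A) (1 - F⁻¹ * A) 0)) :=
    specRad_nonneg _
  have hlt : specRad (cabs (Matrix.fromBlocks 0 (1 - M⁻¹ * A) (1 - F⁻¹ * A) 0)) ^ 2 < 1 := by
    nlinarith
  refine lt_of_le_of_lt (specRad_le _ (by positivity) ?_) hlt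
  intro z hz
  exact abs_spectrum_le' (1 - M⁻¹ * A) (1 - F⁻¹ * A) hz
end

section
/- Let A be a complex n×n H-matrix, and let M and F be complex n×n matrices satisfying ⟨M⟩ - |M - A| = ⟨A⟩ and ⟨F⟩ - |F - A| = ⟨A⟩ (so that M and F are invertible). Let E_1, …, E_m be diagonal n×n matrices whose diagonal entries are each 0 or 1 and which satisfy Σ_{s=1}^m E_s = I, and for each s ∈ {1,…,m} define P_s := (I - F⁻¹A) E_s (I - M⁻¹A). Then ρ(Σ_{s=1}^m |P_s|) < 1. -/
open Matrix

/-- Comparison matrix of a complex square matrix. -/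
noncomputable def compMat {m : Type*} [DecidableEq m]
    (A : Matrix m m ℂ) : Matrix m m ℝ :=
  fun i j => if i = j then ‖A i j‖ else -‖A i j‖

/-- M-matrix: there is `α` with `α I - A ≥ 0` entrywise and `α > ρ(α I - A)`. -/
def IsMMat {m : Type*} [Fintype m] [DecidableEq m]
    (A : Matrix m m ℝ) : Prop :=
  ∃ α : ℝ, (∀ i j, 0 ≤ (α • (1 : Matrix m m ℝ) - A) i j) ∧
    specRad (α • (1 : Matrix m m ℝ) - A) < α

/-- H-matrix: a complex square matrix whose comparison matrix is an M-matrix. -/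
def IsHMat {m : Type*} [Fintype m] [DecidableEq m]
    (A : Matrix m m ℂ) : Prop :=
  IsMMat (compMat A)

open Matrix Filter
open scoped ENNReal NNReal

section AuxLemmas

variable {n : ℕ}

lemma eig_of_mem_spectrum {n : ℕ} (A : Matrix (Fin n) (Fin n) ℂ) (z : ℂ)
    (hz : z ∈ spectrum ℂ A) : ∃ v : Fin n → ℂ, v ≠ 0 ∧ A.mulVec v = z • v := by
  rw [spectrum.mem_iff] at hz
  rw [Matrix.isUnit_iff_isUnit_det, isUnit_iff_ne_zero, not_not] at hz
  obtain ⟨v, hv0, hv⟩ := (Matrix.exists_mulVec_eq_zero_iff).2 hz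
  refine ⟨v, hv0, ?_⟩
  have h1 : (algebraMap ℂ (Matrix (Fin n) (Fin n) ℂ)) z = z • 1 := by
    simp [Algebra.algebraMap_eq_smul_one]
  rw [h1, Matrix.sub_mulVec, Matrix.smul_mulVec, Matrix.one_mulVec, sub_eq_zero] at hv
  exact hv.symm

/-- weighted bound on any complex spectrum element of a complex matrix dominated by S -/
lemma abs_eig_le {n : ℕ} (Ac : Matrix (Fin n) (Fin n) ℂ) (S : Matrix (Fin n) (Fin n) ℝ)
    (hdom : ∀ i j, ‖Ac i j‖ ≤ S i j)
    (u : Fin n → ℝ) (hu : ∀ i, 0 < u i) (r : ℝ)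
    (hSu : ∀ i, S.mulVec u i ≤ r * u i) (z : ℂ) (hz : z ∈ spectrum ℂ Ac) :
    ‖z‖ ≤ r := by
  obtain ⟨v, hv0, hv⟩ := eig_of_mem_spectrum Ac z hz
  obtain ⟨i0, hi0⟩ : ∃ i, v i ≠ 0 := by
    by_contra h; push_neg at h; exact hv0 (funext fun i => h i)
  obtain ⟨i, -, hi⟩ := Finset.exists_max_image Finset.univ
    (fun i => ‖v i‖ / u i) ⟨i0, Finset.mem_univ i0⟩
  set c := ‖v i‖ / u i with hc
  have hcpos : 0 < c := lt_of_lt_of_le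
    (div_pos (by simpa using hi0) (hu i0)) (hi i0 (Finset.mem_univ i0))
  have hvj : ∀ j, ‖v j‖ ≤ c * u j := fun j => by
    have := hi j (Finset.mem_univ j)
    calc ‖v j‖ = ‖v j‖ / u j * u j := by
          field_simp [(hu j).ne']
      _ ≤ c * u j := by
          apply mul_le_mul_of_nonneg_right this (hu j).le
  have hvi : ‖v i‖ = c * u i := by
    rw [hc]; field_simp [(hu i).ne']
  have key : ‖z‖ * ‖v i‖ ≤ r * ‖v i‖ := by
    have h1 : ‖z‖ * ‖v i‖ = ‖Ac.mulVec v i‖ := by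
      rw [hv]; simp [Pi.smul_apply, norm_mul]
    rw [h1]
    calc ‖Ac.mulVec v i‖
        ≤ ∑ j, ‖Ac i j * v j‖ := by
          simpa [Matrix.mulVec, dotProduct] using
            norm_sum_le Finset.univ (fun j => Ac i j * v j)
      _ ≤ ∑ j, S i j * (c * u j) := by
          apply Finset.sum_le_sum
          intro j _
          rw [norm_mul]
          exact mul_le_mul (hdom i j) (hvj j) (by positivity)
            (le_trans (norm_nonneg _) (hdom i j))
      _ = c * S.mulVec u i := by
          simp only [Matrix.mulVec, dotProduct, Finset.mul_sum]
          exact Finset.sum_congr rfl fun j _ => by ring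
      _ ≤ c * (r * u i) := by
          exact mul_le_mul_of_nonneg_left (hSu i) hcpos.le
      _ = r * (c * u i) := by ring
      _ = r * ‖v i‖ := by rw [hvi]
  have hvip : 0 < ‖v i‖ := by rw [hvi]; exact mul_pos hcpos (hu i)
  exact le_of_mul_le_mul_right (by linarith [key]) hvip

lemma specRad_le_s7 {n : ℕ} (S : Matrix (Fin n) (Fin n) ℝ) (hS : ∀ i j, 0 ≤ S i j)
    (u : Fin n → ℝ) (hu : ∀ i, 0 < u i) (r : ℝ) (hr : 0 ≤ r)
    (hSu : ∀ i, S.mulVec u i ≤ r * u i) : specRad S ≤ r := by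
  apply Real.sSup_le _ hr
  rintro x ⟨z, hz, rfl⟩
  exact abs_eig_le (S.map Complex.ofReal) S
    (fun i j => by simp [Matrix.map_apply, Complex.norm_real, abs_of_nonneg (hS i j)])
    u hu r hSu z hz

lemma neumann_core {𝕜 : Type*} [RCLike 𝕜] (J : Matrix (Fin n) (Fin n) 𝕜)
    (hsum : ∀ i j, Summable fun k => (J ^ k) i j) :
    (1 - J) * (Matrix.of fun i j => ∑' k, (J ^ k) i j) = 1 ∧
      (Matrix.of fun i j => ∑' k, (J ^ k) i j) * (1 - J) = 1 := by
  have htel : ∀ i l, HasSum (fun k => (J ^ k) i l - (J ^ (k + 1)) i l) ((1 : Matrix (Fin n) (Fin n) 𝕜) i l) := by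
    intro i l
    have h1 : HasSum (fun k => (J ^ k) i l) (∑' k, (J ^ k) i l) := (hsum i l).hasSum
    have h2 : HasSum (fun k => (J ^ (k + 1)) i l)
        ((∑' k, (J ^ k) i l) - ∑ k ∈ Finset.range 1, (J ^ k) i l) := by
      exact (hasSum_nat_add_iff' (f := fun k => (J ^ k) i l) 1).mpr h1
    have := h1.sub h2
    simpa using this
  constructor
  · ext i l
    rw [Matrix.mul_apply]
    have hswap : ∑ j, (1 - J) i j * (∑' k, (J ^ k) j l)
        = ∑' k, ∑ j, (1 - J) i j * (J ^ k) j l := by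
      simp_rw [← tsum_mul_left]
      exact (Summable.tsum_finsetSum (fun j _ => ((hsum j l).mul_left _))).symm
    simp only [Matrix.of_apply]
    rw [hswap]
    have hinner : ∀ k, ∑ j, (1 - J) i j * (J ^ k) j l
        = (J ^ k) i l - (J ^ (k + 1)) i l := by
      intro k
      have : ∑ j, (1 - J) i j * (J ^ k) j l = ((1 - J) * J ^ k) i l :=
        (Matrix.mul_apply).symm
      rw [this, Matrix.sub_mul, Matrix.one_mul, ← pow_succ']
      simp [Matrix.sub_apply]
    simp_rw [hinner]
    exact (htel i l).tsum_eq
  · ext i l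
    rw [Matrix.mul_apply]
    have hswap : ∑ j, (∑' k, (J ^ k) i j) * (1 - J) j l
        = ∑' k, ∑ j, (J ^ k) i j * (1 - J) j l := by
      simp_rw [← tsum_mul_right]
      exact (Summable.tsum_finsetSum (fun j _ => ((hsum i j).mul_right _))).symm
    simp only [Matrix.of_apply]
    rw [hswap]
    have hinner : ∀ k, ∑ j, (J ^ k) i j * (1 - J) j l
        = (J ^ k) i l - (J ^ (k + 1)) i l := by
      intro k
      have : ∑ j, (J ^ k) i j * (1 - J) j l = (J ^ k * (1 - J)) i l :=
        (Matrix.mul_apply).symm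
      rw [this, Matrix.mul_sub, Matrix.mul_one, ← pow_succ]
      simp [Matrix.sub_apply]
    simp_rw [hinner]
    exact (htel i l).tsum_eq

lemma pow_nonneg_entry (S : Matrix (Fin n) (Fin n) ℝ) (hS : ∀ i j, 0 ≤ S i j) :
    ∀ k i j, 0 ≤ (S ^ k) i j := by
  intro k
  induction k with
  | zero => intro i j; by_cases h : i = j <;> simp [pow_zero, Matrix.one_apply, h]
  | succ k ih =>
    intro i j
    rw [pow_succ, Matrix.mul_apply]
    exact Finset.sum_nonneg fun l _ => mul_nonneg (ih i l) (hS l j)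

lemma pow_mulVec_le (S : Matrix (Fin n) (Fin n) ℝ) (hS : ∀ i j, 0 ≤ S i j)
    (u : Fin n → ℝ) (r : ℝ) (hr0 : 0 ≤ r)
    (hSu : ∀ i, S.mulVec u i ≤ r * u i) :
    ∀ k i, (S ^ k).mulVec u i ≤ r ^ k * u i := by
  intro k
  induction k with
  | zero => intro i; simp [Matrix.one_mulVec]
  | succ k ih =>
    intro i
    have h1 : (S ^ (k + 1)).mulVec u = S.mulVec ((S ^ k).mulVec u) := by
      rw [pow_succ', Matrix.mulVec_mulVec]
    rw [h1]
    calc S.mulVec ((S ^ k).mulVec u) i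
        ≤ S.mulVec (fun j => r ^ k * u j) i := by
          simp only [Matrix.mulVec, dotProduct]
          exact Finset.sum_le_sum fun j _ =>
            mul_le_mul_of_nonneg_left (ih j) (hS i j)
      _ = r ^ k * S.mulVec u i := by
          simp only [Matrix.mulVec, dotProduct, Finset.mul_sum]
          exact Finset.sum_congr rfl fun j _ => by ring
      _ ≤ r ^ k * (r * u i) := mul_le_mul_of_nonneg_left (hSu i) (by positivity)
      _ = r ^ (k + 1) * u i := by ring
lemma pow_entry_le (S : Matrix (Fin n) (Fin n) ℝ) (hS : ∀ i j, 0 ≤ S i j)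
    (u : Fin n → ℝ) (hu : ∀ i, 0 < u i) (r : ℝ) (hr0 : 0 ≤ r)
    (hSu : ∀ i, S.mulVec u i ≤ r * u i) :
    ∀ k i j, (S ^ k) i j ≤ r ^ k * (u i / u j) := by
  intro k i j
  have h1 : (S ^ k) i j * u j ≤ (S ^ k).mulVec u i := by
    rw [Matrix.mulVec, dotProduct]
    exact Finset.single_le_sum (f := fun l => (S ^ k) i l * u l)
      (fun l _ => mul_nonneg (pow_nonneg_entry S hS k i l) (hu l).le) (Finset.mem_univ j)
  have h2 := le_trans h1 (pow_mulVec_le S hS u r hr0 hSu k i)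
  rw [mul_div_assoc', le_div_iff₀ (hu j)]
  exact h2
lemma cabs_pow_le (J : Matrix (Fin n) (Fin n) ℂ) (S : Matrix (Fin n) (Fin n) ℝ)
    (hS : ∀ i j, 0 ≤ S i j) (hdom : ∀ i j, ‖J i j‖ ≤ S i j) :
    ∀ k i j, ‖(J ^ k) i j‖ ≤ (S ^ k) i j := by
  intro k
  induction k with
  | zero =>
    intro i j; by_cases h : i = j <;> simp [pow_zero, Matrix.one_apply, h]
  | succ k ih =>
    intro i j
    rw [pow_succ, pow_succ, Matrix.mul_apply, Matrix.mul_apply]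
    calc ‖∑ l, (J ^ k) i l * J l j‖
        ≤ ∑ l, ‖(J ^ k) i l * J l j‖ :=
          norm_sum_le _ _
      _ ≤ ∑ l, (S ^ k) i l * S l j := by
          apply Finset.sum_le_sum; intro l _
          rw [norm_mul]
          exact mul_le_mul (ih i l) (hdom l j) (norm_nonneg _)
            (pow_nonneg_entry S hS k i l)

lemma neumann_dom (J : Matrix (Fin n) (Fin n) ℂ) (S : Matrix (Fin n) (Fin n) ℝ)
    (hS : ∀ i j, 0 ≤ S i j) (hdom : ∀ i j, ‖J i j‖ ≤ S i j)
    (u : Fin n → ℝ) (hu : ∀ i, 0 < u i) (r : ℝ) (hr0 : 0 ≤ r) (hr1 : r < 1)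
    (hSu : ∀ i, S.mulVec u i ≤ r * u i) :
    ∃ (T : Matrix (Fin n) (Fin n) ℂ) (TS : Matrix (Fin n) (Fin n) ℝ),
      (1 - J) * T = 1 ∧ T * (1 - J) = 1 ∧ (1 - S) * TS = 1 ∧ TS * (1 - S) = 1 ∧
      (∀ i j, 0 ≤ TS i j) ∧ (∀ i j, ‖T i j‖ ≤ TS i j) ∧
      (∀ i j, (1 : Matrix (Fin n) (Fin n) ℝ) i j ≤ TS i j) := by
  have hgeo : ∀ i j : Fin n, Summable fun k => r ^ k * (u i / u j) :=
    fun i j => (summable_geometric_of_lt_one hr0 hr1).mul_right _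
  have hsumS : ∀ i j, Summable fun k => (S ^ k) i j := fun i j =>
    Summable.of_nonneg_of_le (fun k => pow_nonneg_entry S hS k i j)
      (fun k => pow_entry_le S hS u hu r hr0 hSu k i j) (hgeo i j)
  have hsumJ : ∀ i j, Summable fun k => (J ^ k) i j := fun i j =>
    Summable.of_norm_bounded (hsumS i j)
      (fun k => by exact cabs_pow_le J S hS hdom k i j)
  obtain ⟨hJ1, hJ2⟩ := neumann_core J hsumJ
  obtain ⟨hS1, hS2⟩ := neumann_core S hsumS
  refine ⟨_, _, hJ1, hJ2, hS1, hS2, ?_, ?_, ?_⟩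
  · intro i j
    exact tsum_nonneg fun k => pow_nonneg_entry S hS k i j
  · intro i j
    calc ‖(Matrix.of fun i j => ∑' k, (J ^ k) i j) i j‖
        ≤ ∑' k, ‖(J ^ k) i j‖ := by
          simpa using norm_tsum_le_tsum_norm (f := fun k => (J ^ k) i j)
            (Summable.of_nonneg_of_le (fun k => norm_nonneg _)
              (fun k => cabs_pow_le J S hS hdom k i j) (hsumS i j))
      _ ≤ ∑' k, (S ^ k) i j := by
          apply Summable.tsum_le_tsum (fun k => cabs_pow_le J S hS hdom k i j)
            (Summable.of_nonneg_of_le (fun k => norm_nonneg _)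
              (fun k => cabs_pow_le J S hS hdom k i j) (hsumS i j)) (hsumS i j)
      _ = (Matrix.of fun i j => ∑' k, (S ^ k) i j) i j := rfl
  · intro i j
    have := Summable.le_tsum (hsumS i j) 0 (fun k _ => pow_nonneg_entry S hS k i j)
    simpa using this

set_option maxHeartbeats 1000000 in
lemma exists_pos_vec (hn : 0 < n) (Ar : Matrix (Fin n) (Fin n) ℝ) (h : IsMMat Ar) :
    ∃ u : Fin n → ℝ, (∀ i, 0 < u i) ∧ ∀ i, 0 < Ar.mulVec u i := by
  classical
  obtain ⟨α, hB0, hBr⟩ := h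
  haveI : Nonempty (Fin n) := Fin.pos_iff_nonempty.mp hn
  set B : Matrix (Fin n) (Fin n) ℝ := α • (1 : Matrix (Fin n) (Fin n) ℝ) - Ar with hBdef
  have hArB : Ar = α • (1 : Matrix (Fin n) (Fin n) ℝ) - B := by simp [hBdef]
  letI : SeminormedRing (Matrix (Fin n) (Fin n) ℂ) := Matrix.linftyOpSemiNormedRing
  letI : NormedRing (Matrix (Fin n) (Fin n) ℂ) := Matrix.linftyOpNormedRing
  letI : NormedAlgebra ℂ (Matrix (Fin n) (Fin n) ℂ) := Matrix.linftyOpNormedAlgebra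
  haveI : CompleteSpace (Matrix (Fin n) (Fin n) ℂ) :=
    FiniteDimensional.complete ℂ (Matrix (Fin n) (Fin n) ℂ)
  haveI : Nontrivial (Matrix (Fin n) (Fin n) ℂ) :=
    inferInstanceAs (Nontrivial (Fin n → Fin n → ℂ))
  set B' : Matrix (Fin n) (Fin n) ℂ := B.map Complex.ofReal with hB'def
  have hmapp : ∀ k : ℕ, B' ^ k = (B ^ k).map Complex.ofReal := by
    intro k
    have : B' = Complex.ofRealHom.mapMatrix B := rfl
    rw [this, ← map_pow]
    rfl
  -- bound on spectrum elements
  set one : Fin n → ℝ := fun _ => 1 with hone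
  set R : ℝ := Finset.univ.sup' Finset.univ_nonempty (fun i => B.mulVec one i) with hR
  have habs : ∀ z ∈ spectrum ℂ B', ‖z‖ ≤ R := by
    intro z hz
    apply abs_eig_le B' B (fun i j => by
      simp only [hB'def, Matrix.map_apply, Complex.norm_real, Real.norm_eq_abs]
      exact le_of_eq (abs_of_nonneg (by simpa using hB0 i j)))
      one (fun _ => one_pos) R _ z hz
    intro i
    have h := Finset.le_sup' (fun i => B.mulVec one i) (Finset.mem_univ i)
    calc B.mulVec one i ≤ R := h
      _ = R * one i := by simp [hone]
  have hbdd : BddAbove ((fun z => ‖z‖) '' spectrum ℂ B') := by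
    refine ⟨R, ?_⟩; rintro x ⟨z, hz, rfl⟩; exact habs z hz
  have hspec_ne : (spectrum ℂ B').Nonempty := spectrum.nonempty B'
  obtain ⟨z₀, hz₀⟩ := hspec_ne
  have hsr0 : 0 ≤ specRad B := le_trans (norm_nonneg z₀)
    (le_csSup hbdd ⟨z₀, hz₀, rfl⟩)
  have hα : 0 < α := lt_of_le_of_lt hsr0 hBr
  -- spectral radius bound
  have hsrle : spectralRadius ℂ B' ≤ ENNReal.ofReal (specRad B) := by
    rw [spectralRadius]
    refine iSup₂_le fun z hz => ?_
    rw [← enorm_eq_nnnorm, ← ofReal_norm]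
    exact ENNReal.ofReal_le_ofReal (le_csSup hbdd ⟨z, hz, rfl⟩)
  have hlt : spectralRadius ℂ B' < ENNReal.ofReal α :=
    lt_of_le_of_lt hsrle ((ENNReal.ofReal_lt_ofReal_iff hα).mpr hBr)
  -- Gelfand
  have hgel := spectrum.pow_nnnorm_pow_one_div_tendsto_nhds_spectralRadius B'
  have hev : ∀ᶠ (k : ℕ) in atTop, (‖B' ^ k‖₊ : ℝ≥0∞) ^ (1 / (k : ℝ)) < ENNReal.ofReal α :=
    hgel.eventually_lt_const hlt
  obtain ⟨k, hk1, hkev⟩ : ∃ k : ℕ, 1 ≤ k ∧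
      (‖B' ^ k‖₊ : ℝ≥0∞) ^ (1 / (k : ℝ)) < ENNReal.ofReal α := by
    obtain ⟨k, hk⟩ := ((eventually_ge_atTop 1).and hev).exists
    exact ⟨k, hk.1, hk.2⟩
  have hkR : (0 : ℝ) < k := by exact_mod_cast hk1
  -- turn into a real inequality ‖B'^k‖ < α^k
  have hnormlt : ‖B' ^ k‖ < α ^ k := by
    have h1 : ((‖B' ^ k‖₊ : ℝ≥0∞) ^ (1 / (k : ℝ))) ^ (k : ℝ) <
        (ENNReal.ofReal α) ^ (k : ℝ) :=
      ENNReal.rpow_lt_rpow hkev hkR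
    rw [← ENNReal.rpow_mul, one_div, inv_mul_cancel₀ (ne_of_gt hkR), ENNReal.rpow_one,
      ENNReal.rpow_natCast, ← ENNReal.ofReal_pow hα.le] at h1
    have h2 := ENNReal.toReal_lt_toReal (ENNReal.coe_ne_top) (ENNReal.ofReal_ne_top) |>.mpr h1
    rwa [ENNReal.coe_toReal, coe_nnnorm, ENNReal.toReal_ofReal (by positivity)] at h2
  -- row sums of B^k bounded
  have hrow : ∀ i, (B ^ k).mulVec one i < α ^ k := by
    intro i
    have hsum : (B ^ k).mulVec one i = ∑ j, (B ^ k) i j := by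
      simp [Matrix.mulVec, dotProduct, hone]
    have hle : ∑ j, (B ^ k) i j ≤ ‖B' ^ k‖ := by
      have : (∑ j, ‖(B' ^ k) i j‖₊) ≤ ‖B' ^ k‖₊ := by
        rw [Matrix.linfty_opNNNorm_def]
        exact Finset.le_sup (f := fun i => ∑ j, ‖(B' ^ k) i j‖₊) (Finset.mem_univ i)
      have h3 : ∑ j, ‖(B' ^ k) i j‖ ≤ ‖B' ^ k‖ := by
        rw [← NNReal.coe_le_coe] at this
        simpa using this
      refine le_trans (le_of_eq ?_) h3
      refine Finset.sum_congr rfl fun j _ => ?_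
      rw [hmapp k]
      simp only [Matrix.map_apply, Complex.norm_real]
      exact (Real.norm_of_nonneg (pow_nonneg_entry B (fun i j => by simpa using hB0 i j) k i j)).symm
    rw [hsum]; exact lt_of_le_of_lt hle hnormlt
  -- construct u
  set u : Fin n → ℝ :=
    ∑ k' ∈ Finset.range k, ((α ^ (k' + 1))⁻¹) • ((B ^ k').mulVec one) with hu_def
  have hBk_nonneg : ∀ k' i, 0 ≤ (B ^ k').mulVec one i := by
    intro k' i
    show 0 ≤ ∑ j, (B ^ k') i j * one j
    apply Finset.sum_nonneg
    intro j _
    have := pow_nonneg_entry B (fun i j => by simpa using hB0 i j) k' i j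
    simp only [hone]
    nlinarith
  have hupos : ∀ i, 0 < u i := by
    intro i
    rw [hu_def]
    have h0 : (0:ℕ) ∈ Finset.range k := Finset.mem_range.mpr hk1
    rw [Finset.sum_apply]
    apply Finset.sum_pos'
    · intro k' _
      simp only [Pi.smul_apply, smul_eq_mul]
      exact mul_nonneg (by positivity) (hBk_nonneg k' i)
    · refine ⟨0, h0, ?_⟩
      simp only [Pi.smul_apply, smul_eq_mul]
      have h1 : (B ^ 0).mulVec one i = 1 := by simp [Matrix.one_mulVec, hone]
      rw [h1]
      positivity
  refine ⟨u, hupos, fun i => ?_⟩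
  -- compute Ar *ᵥ u
  have hmv : Ar.mulVec u = α • u - B.mulVec u := by
    rw [hArB]
    rw [Matrix.sub_mulVec, Matrix.smul_mulVec, Matrix.one_mulVec]
  have hBu : B.mulVec u = ∑ k' ∈ Finset.range k, ((α ^ (k' + 1))⁻¹) • ((B ^ (k' + 1)).mulVec one) := by
    rw [hu_def]
    have : B.mulVec (∑ k' ∈ Finset.range k, ((α ^ (k' + 1))⁻¹) • ((B ^ k').mulVec one))
        = ∑ k' ∈ Finset.range k, B.mulVec (((α ^ (k' + 1))⁻¹) • ((B ^ k').mulVec one)) := by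
      rw [← Matrix.mulVecLin_apply, map_sum]
      simp only [Matrix.mulVecLin_apply]
    rw [this]
    refine Finset.sum_congr rfl fun k' _ => ?_
    rw [Matrix.mulVec_smul, Matrix.mulVec_mulVec, ← pow_succ']
  have key : Ar.mulVec u i = 1 - (α ^ k)⁻¹ * (B ^ k).mulVec one i := by
    rw [hmv]
    have h1 : (α • u) i = ∑ k' ∈ Finset.range k, (α ^ k')⁻¹ * (B ^ k').mulVec one i := by
      simp only [Pi.smul_apply, smul_eq_mul, hu_def, Finset.sum_apply, Pi.smul_apply,
        smul_eq_mul, Finset.mul_sum]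
      refine Finset.sum_congr rfl fun k' _ => ?_
      rw [pow_succ]
      field_simp
    have h2 : (B.mulVec u) i = ∑ k' ∈ Finset.range k, (α ^ (k' + 1))⁻¹ * (B ^ (k' + 1)).mulVec one i := by
      rw [hBu]
      simp [Finset.sum_apply]
    rw [Pi.sub_apply, h1, h2, ← Finset.sum_sub_distrib]
    rw [Finset.sum_range_sub' (fun j => (α ^ j)⁻¹ * (B ^ j).mulVec one i) k]
    have : (B ^ 0).mulVec one i = 1 := by simp [Matrix.one_mulVec, hone]
    rw [this]
    norm_num
  rw [key]
  have := hrow i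
  have h3 : (α ^ k)⁻¹ * (B ^ k).mulVec one i < (α ^ k)⁻¹ * α ^ k := by
    apply mul_lt_mul_of_pos_left this
    positivity
  rw [inv_mul_cancel₀ (by positivity : (α:ℝ) ^ k ≠ 0)] at h3
  linarith

lemma mulVecR_eq (M : Matrix (Fin n) (Fin n) ℝ) (v : Fin n → ℝ) (i : Fin n) :
    (M *ᵥ v) i = ∑ j, M i j * v j := rfl

/-- entrywise: (cabs (X*Z)) *ᵥ u ≤ XB *ᵥ ((cabs Z) *ᵥ u) when cabs X ≤ XB, 0 ≤ u -/
lemma mulVec_cabs_mul_le (X Z : Matrix (Fin n) (Fin n) ℂ) (XB : Matrix (Fin n) (Fin n) ℝ)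
    (hX : ∀ i j, ‖X i j‖ ≤ XB i j)
    (u : Fin n → ℝ) (hu : ∀ i, 0 ≤ u i) (i : Fin n) :
    (cabs (X * Z)).mulVec u i ≤ XB.mulVec ((cabs Z).mulVec u) i := by
  have h1 : (cabs (X * Z)).mulVec u i ≤ ∑ j, (∑ l, ‖X i l‖ * ‖Z l j‖) * u j := by
    rw [mulVecR_eq]
    apply Finset.sum_le_sum
    intro j _
    apply mul_le_mul_of_nonneg_right _ (hu j)
    show ‖(X * Z) i j‖ ≤ _
    rw [Matrix.mul_apply]
    refine le_trans (norm_sum_le _ _) ?_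
    exact le_of_eq (Finset.sum_congr rfl fun l _ => norm_mul _ _)
  refine le_trans h1 ?_
  rw [mulVecR_eq]
  simp only [Finset.sum_mul]
  rw [Finset.sum_comm]
  apply Finset.sum_le_sum
  intro l _
  have : ∑ j, ‖X i l‖ * ‖Z l j‖ * u j
      = ‖X i l‖ * (cabs Z).mulVec u l := by
    rw [mulVecR_eq, Finset.mul_sum]
    exact Finset.sum_congr rfl fun j _ => by rw [mul_assoc]; rfl
  rw [this]
  apply mul_le_mul_of_nonneg_right (hX i l)
  rw [mulVecR_eq]
  apply Finset.sum_nonneg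
  intro j _
  exact mul_nonneg (norm_nonneg _) (hu j)

lemma mulVec_mono_s7 (XB : Matrix (Fin n) (Fin n) ℝ) (hXB : ∀ i j, 0 ≤ XB i j)
    (v w : Fin n → ℝ) (hvw : ∀ l, v l ≤ w l) (i : Fin n) :
    XB.mulVec v i ≤ XB.mulVec w i := by
  rw [mulVecR_eq, mulVecR_eq]
  exact Finset.sum_le_sum fun l _ => mul_le_mul_of_nonneg_left (hvw l) (hXB i l)

lemma mulVec_nonneg (XB : Matrix (Fin n) (Fin n) ℝ) (hXB : ∀ i j, 0 ≤ XB i j)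
    (v : Fin n → ℝ) (hv : ∀ l, 0 ≤ v l) (i : Fin n) : 0 ≤ XB.mulVec v i := by
  rw [mulVecR_eq]
  exact Finset.sum_nonneg fun l _ => mul_nonneg (hXB i l) (hv l)

lemma key_bound (hn : 0 < n) (Mm A : Matrix (Fin n) (Fin n) ℂ)
    (hM : compMat Mm - cabs (Mm - A) = compMat A)
    (u : Fin n → ℝ) (hu : ∀ i, 0 < u i) (hAu : ∀ i, 0 < (compMat A).mulVec u i) :
    ∃ a : Fin n → ℝ, (∀ i, 0 < a i) ∧
      ∀ i, (cabs (1 - Mm⁻¹ * A)).mulVec u i ≤ u i - a i := by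
  classical
  haveI : Nonempty (Fin n) := Fin.pos_iff_nonempty.mp hn
  have hMA : compMat Mm = compMat A + cabs (Mm - A) := by
    rw [← hM, sub_add_cancel]
  have hcabs_nonneg : ∀ (X : Matrix (Fin n) (Fin n) ℂ) i j, 0 ≤ cabs X i j :=
    fun X i j => norm_nonneg _
  have hMu : ∀ i, (compMat Mm).mulVec u i
      = (compMat A).mulVec u i + (cabs (Mm - A)).mulVec u i := by
    intro i; rw [hMA, Matrix.add_mulVec]; rfl
  have hMupos : ∀ i, 0 < (compMat Mm).mulVec u i := fun i => by
    have := mulVec_nonneg (cabs (Mm - A)) (hcabs_nonneg _) u (fun l => (hu l).le) i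
    rw [hMu i]; linarith [hAu i]
  -- expansion of comparison-matrix action
  have hexp : ∀ i, (compMat Mm).mulVec u i
      = ‖Mm i i‖ * u i
        - ∑ j ∈ Finset.univ \ {i}, ‖Mm i j‖ * u j := by
    intro i
    rw [mulVecR_eq,
      Finset.sum_eq_sum_sdiff_singleton_add (Finset.mem_univ i)]
    have h1 : compMat Mm i i = ‖Mm i i‖ := by simp [compMat]
    have h2 : ∀ j ∈ Finset.univ \ {i}, compMat Mm i j * u j
        = -(‖Mm i j‖ * u j) := by
      intro j hj
      have : i ≠ j := by
        rcases Finset.mem_sdiff.mp hj with ⟨-, hj2⟩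
        exact fun h => hj2 (Finset.mem_singleton.mpr h.symm)
      simp [compMat, this.symm, this]
    rw [Finset.sum_congr rfl h2, h1]
    rw [Finset.sum_neg_distrib]
    ring
  have hoff_lt : ∀ i, ∑ j ∈ Finset.univ \ {i}, ‖Mm i j‖ * u j
      < ‖Mm i i‖ * u i := by
    intro i
    have := hMupos i
    rw [hexp i] at this
    linarith
  have hoff_nonneg : ∀ i, 0 ≤ ∑ j ∈ Finset.univ \ {i}, ‖Mm i j‖ * u j :=
    fun i => Finset.sum_nonneg fun j _ => mul_nonneg (norm_nonneg _) (hu j).le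
  have hdiagpos : ∀ i, 0 < ‖Mm i i‖ := by
    intro i
    have h1 := lt_of_le_of_lt (hoff_nonneg i) (hoff_lt i)
    by_contra h; push_neg at h; have : ‖Mm i i‖ = 0 := le_antisymm h (norm_nonneg _); rw [this, zero_mul] at h1; linarith
  have hMne : ∀ i, Mm i i ≠ 0 := fun i h => by
    have := hdiagpos i; rw [h, norm_zero] at this; linarith
  -- Jacobi matrices
  set S : Matrix (Fin n) (Fin n) ℝ :=
    Matrix.of (fun i j => if i = j then 0 else ‖Mm i j‖ / ‖Mm i i‖) with hSdef
  set J : Matrix (Fin n) (Fin n) ℂ :=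
    Matrix.of (fun i j => if i = j then 0 else -((Mm i i)⁻¹ * Mm i j)) with hJdef
  have hS0 : ∀ i j, 0 ≤ S i j := by
    intro i j
    rw [hSdef, Matrix.of_apply]
    split
    · exact le_refl 0
    · positivity
  have hdom : ∀ i j, ‖J i j‖ ≤ S i j := by
    intro i j
    rw [hSdef, hJdef, Matrix.of_apply, Matrix.of_apply]
    by_cases h : i = j
    · simp [h]
    · rw [if_neg h, if_neg h, norm_neg, norm_mul, norm_inv, div_eq_mul_inv]
      exact le_of_eq (mul_comm _ _)
  have hSu_entry : ∀ i, S.mulVec u i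
      = (‖Mm i i‖)⁻¹ * ∑ j ∈ Finset.univ \ {i}, ‖Mm i j‖ * u j := by
    intro i
    rw [mulVecR_eq, Finset.sum_eq_sum_sdiff_singleton_add (Finset.mem_univ i)]
    have h1 : S i i * u i = 0 := by rw [hSdef, Matrix.of_apply, if_pos rfl, zero_mul]
    rw [h1, add_zero, Finset.mul_sum]
    refine Finset.sum_congr rfl fun j hj => ?_
    have hij : i ≠ j := by
      rcases Finset.mem_sdiff.mp hj with ⟨-, hj2⟩
      exact fun h => hj2 (Finset.mem_singleton.mpr h.symm)
    rw [hSdef, Matrix.of_apply, if_neg hij, div_eq_mul_inv]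
    ring
  have hSu_lt : ∀ i, S.mulVec u i < u i := by
    intro i
    rw [hSu_entry i]
    rw [inv_mul_lt_iff₀ (hdiagpos i)]
    exact hoff_lt i
  have hSu_nonneg : ∀ i, 0 ≤ S.mulVec u i :=
    fun i => mulVec_nonneg S hS0 u (fun l => (hu l).le) i
  set r : ℝ := Finset.univ.sup' Finset.univ_nonempty (fun i => S.mulVec u i / u i) with hrdef
  have hr1 : r < 1 := by
    rw [hrdef, Finset.sup'_lt_iff]
    intro i _
    rw [div_lt_one (hu i)]
    exact hSu_lt i
  have hr0 : 0 ≤ r := by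
    obtain ⟨i0⟩ := (inferInstance : Nonempty (Fin n))
    exact le_trans (div_nonneg (hSu_nonneg i0) (hu i0).le)
      (Finset.le_sup' (f := fun i => S.mulVec u i / u i) (Finset.mem_univ i0))
  have hSur : ∀ i, S.mulVec u i ≤ r * u i := by
    intro i
    have := Finset.le_sup' (fun i => S.mulVec u i / u i) (Finset.mem_univ i)
    calc S.mulVec u i = S.mulVec u i / u i * u i := by field_simp [(hu i).ne']
      _ ≤ r * u i := mul_le_mul_of_nonneg_right this (hu i).le
  obtain ⟨T, TS, hJ1, hJ2, hS1, hS2, hTS0, hTabs, hTS1⟩ :=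
    neumann_dom J S hS0 hdom u hu r hr0 hr1 hSur
  set D : Matrix (Fin n) (Fin n) ℂ := Matrix.diagonal (fun i => Mm i i) with hDdef
  set Dinv : Matrix (Fin n) (Fin n) ℂ := Matrix.diagonal (fun i => (Mm i i)⁻¹) with hDinvdef
  have hMD : Mm = D * (1 - J) := by
    ext i j
    rw [hDdef, Matrix.diagonal_mul]
    by_cases h : i = j
    · subst h
      have : (1 - J) i i = 1 := by
        rw [Matrix.sub_apply, Matrix.one_apply_eq, hJdef, Matrix.of_apply, if_pos rfl, sub_zero]
      rw [this, mul_one]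
    · have : (1 - J) i j = (Mm i i)⁻¹ * Mm i j := by
        rw [Matrix.sub_apply, Matrix.one_apply_ne h, hJdef, Matrix.of_apply, if_neg h]
        ring
      rw [this, ← mul_assoc, mul_inv_cancel₀ (hMne i), one_mul]
  have hright : Mm * (T * Dinv) = 1 := by
    rw [hMD, Matrix.mul_assoc, ← Matrix.mul_assoc (1 - J) T Dinv, hJ1, Matrix.one_mul,
      hDdef, hDinvdef, Matrix.diagonal_mul_diagonal]
    have : (fun i => Mm i i * (Mm i i)⁻¹) = fun _ : Fin n => (1:ℂ) := by
      funext i; exact mul_inv_cancel₀ (hMne i)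
    rw [this, Matrix.diagonal_one]
  have hMinv : Mm⁻¹ = T * Dinv := Matrix.inv_eq_right_inv hright
  have hdet : IsUnit Mm.det := Matrix.isUnit_det_of_right_inverse hright
  have hinvmul : Mm⁻¹ * Mm = 1 := Matrix.nonsing_inv_mul Mm hdet
  have hone_sub : (1 : Matrix (Fin n) (Fin n) ℂ) - Mm⁻¹ * A = T * (Dinv * (Mm - A)) := by
    have h5 : (1 : Matrix (Fin n) (Fin n) ℂ) - Mm⁻¹ * A = Mm⁻¹ * (Mm - A) := by
      rw [Matrix.mul_sub, hinvmul]
    rw [h5, hMinv, Matrix.mul_assoc]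
  set Z : Matrix (Fin n) (Fin n) ℂ := Dinv * (Mm - A) with hZdef
  have hstep1 : ∀ i, (cabs (1 - Mm⁻¹ * A)).mulVec u i ≤ TS.mulVec ((cabs Z).mulVec u) i := by
    intro i
    rw [hone_sub]
    exact mulVec_cabs_mul_le T Z TS hTabs u (fun l => (hu l).le) i
  set w : Fin n → ℝ := (cabs Z).mulVec u with hwdef
  have hw : ∀ l, w l = (‖Mm l l‖)⁻¹ * (cabs (Mm - A)).mulVec u l := by
    intro l
    rw [hwdef, mulVecR_eq, mulVecR_eq, Finset.mul_sum]
    refine Finset.sum_congr rfl fun j _ => ?_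
    have : cabs Z l j = (‖Mm l l‖)⁻¹ * cabs (Mm - A) l j := by
      show ‖Z l j‖ = _
      rw [hZdef, hDinvdef, Matrix.diagonal_mul, norm_mul, norm_inv]
      rfl
    rw [this]
    ring
  set b : Fin n → ℝ := fun l => (‖Mm l l‖)⁻¹ * (compMat A).mulVec u l with hbdef
  have hbpos : ∀ l, 0 < b l := fun l =>
    mul_pos (inv_pos.mpr (hdiagpos l)) (hAu l)
  have hwb : ∀ l, w l + b l = ((1 - S).mulVec u) l := by
    intro l
    have h6 : ((1 - S).mulVec u) l = u l - S.mulVec u l := by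
      rw [Matrix.sub_mulVec, Matrix.one_mulVec]; rfl
    have h7 := hMu l
    have h8 := hexp l
    have h9 : (cabs (Mm - A)).mulVec u l + (compMat A).mulVec u l
        = ‖Mm l l‖ * u l
          - ∑ j ∈ Finset.univ \ {l}, ‖Mm l j‖ * u j := by
      rw [← h8, h7]; ring
    have hMl := (hdiagpos l).ne'
    rw [h6, hSu_entry l, hw l]
    show (‖Mm l l‖)⁻¹ * (cabs (Mm - A)).mulVec u l
      + (‖Mm l l‖)⁻¹ * (compMat A).mulVec u l = _
    rw [← mul_add, h9, mul_sub, inv_mul_cancel_left₀ hMl]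
  have hTSwb : ∀ i, TS.mulVec w i + TS.mulVec b i = u i := by
    intro i
    have h10 : TS.mulVec (fun l => w l + b l) = TS.mulVec ((1 - S).mulVec u) := by
      have : (fun l => w l + b l) = (1 - S).mulVec u := funext hwb
      rw [this]
    have h11 : TS.mulVec ((1 - S).mulVec u) = u := by
      rw [Matrix.mulVec_mulVec, hS2, Matrix.one_mulVec]
    have h12 : TS.mulVec (fun l => w l + b l) i = TS.mulVec w i + TS.mulVec b i := by
      have : (fun l => w l + b l) = w + b := rfl
      rw [this, Matrix.mulVec_add]; rfl
    rw [← h12, h10, h11]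
  refine ⟨fun i => TS.mulVec b i, ?_, ?_⟩
  · intro i
    have h13 : TS i i * b i ≤ TS.mulVec b i := by
      rw [mulVecR_eq]
      exact Finset.single_le_sum (f := fun j => TS i j * b j)
        (fun j _ => mul_nonneg (hTS0 i j) (hbpos j).le) (Finset.mem_univ i)
    have h14 : (1:ℝ) ≤ TS i i := by
      have := hTS1 i i
      rwa [Matrix.one_apply_eq] at this
    nlinarith [hbpos i]
  · intro i
    have := hTSwb i
    have h15 : TS.mulVec w i = u i - TS.mulVec b i := by linarith
    exact le_trans (hstep1 i) (le_of_eq h15)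

end AuxLemmas

theorem stmt7 {n m : ℕ} (A M F : Matrix (Fin n) (Fin n) ℂ)
    (hA : IsHMat A)
    (hM : compMat M - cabs (M - A) = compMat A)
    (hF : compMat F - cabs (F - A) = compMat A)
    (E : Fin m → Matrix (Fin n) (Fin n) ℂ)
    (hEdiag : ∀ s i j, i ≠ j → E s i j = 0)
    (hE01 : ∀ s i, E s i i = 0 ∨ E s i i = 1)
    (hEsum : ∑ s, E s = 1)
    (P : Fin m → Matrix (Fin n) (Fin n) ℂ)
    (hP : ∀ s, P s = (1 - F⁻¹ * A) * E s * (1 - M⁻¹ * A)) :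
    specRad (∑ s, cabs (P s)) < 1 := by
  classical
  rcases Nat.eq_zero_or_pos n with hn0 | hn
  · subst hn0
    have hemp : spectrum ℂ ((∑ s, cabs (P s)).map Complex.ofReal) = ∅ := by
      ext z
      simp only [spectrum.mem_iff, Set.mem_empty_iff_false, iff_false, not_not]
      exact isUnit_of_subsingleton _
    rw [specRad, hemp]
    rw [Set.image_empty, Real.sSup_empty]
    norm_num
  haveI : Nonempty (Fin n) := Fin.pos_iff_nonempty.mp hn
  obtain ⟨u, hu, hAu⟩ := exists_pos_vec hn (compMat A) hA
  obtain ⟨aM, haM, hMbound⟩ := key_bound hn M A hM u hu hAu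
  obtain ⟨aF, haF, hFbound⟩ := key_bound hn F A hF u hu hAu
  set X : Matrix (Fin n) (Fin n) ℝ := cabs (1 - F⁻¹ * A) with hXdef
  set Y : Matrix (Fin n) (Fin n) ℝ := cabs (1 - M⁻¹ * A) with hYdef
  set B : Matrix (Fin n) (Fin n) ℝ := ∑ s, cabs (P s) with hBdef
  have hcabs_nonneg : ∀ (W : Matrix (Fin n) (Fin n) ℂ) (i j : Fin n), 0 ≤ cabs W i j :=
    fun W i j => norm_nonneg _
  have hB0 : ∀ i j, 0 ≤ B i j := by
    intro i j
    rw [hBdef, Matrix.sum_apply]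
    exact Finset.sum_nonneg fun s _ => hcabs_nonneg _ i j
  -- diagonal weights
  set e : Fin m → Fin n → ℝ := fun s l => ‖E s l l‖ with hedef
  have he_nonneg : ∀ s l, 0 ≤ e s l := fun s l => norm_nonneg _
  have he_sum : ∀ l, ∑ s, e s l = 1 := by
    intro l
    have h1 : ∀ s, e s l = (E s l l).re := by
      intro s
      rcases hE01 s l with h | h <;> simp [hedef, h]
    rw [Finset.sum_congr rfl fun s _ => h1 s]
    have h2 : ∑ s, (E s l l).re = ((∑ s, E s) l l).re := by
      rw [Matrix.sum_apply]
      exact (Complex.re_sum _ _).symm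
    rw [h2, hEsum, Matrix.one_apply_eq, Complex.one_re]
  -- per-s bound
  have hstep : ∀ s i, (cabs (P s)).mulVec u i
      ≤ X.mulVec (fun l => e s l * Y.mulVec u l) i := by
    intro s i
    have h1 : P s = (1 - F⁻¹ * A) * (E s * (1 - M⁻¹ * A)) := by
      rw [hP s, Matrix.mul_assoc]
    have h2 := mulVec_cabs_mul_le (1 - F⁻¹ * A) (E s * (1 - M⁻¹ * A)) X
      (fun i j => le_of_eq rfl) u (fun l => (hu l).le) i
    rw [← h1] at h2
    refine le_trans h2 (le_of_eq ?_)
    congr 1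
    funext l
    rw [mulVecR_eq, mulVecR_eq, Finset.mul_sum]
    refine Finset.sum_congr rfl fun j _ => ?_
    have h3 : (E s * (1 - M⁻¹ * A)) l j = E s l l * (1 - M⁻¹ * A) l j := by
      rw [Matrix.mul_apply]
      rw [Finset.sum_eq_single_of_mem l (Finset.mem_univ l)]
      intro k _ hk
      rw [hEdiag s l k (Ne.symm hk), zero_mul]
    have h4 : cabs (E s * (1 - M⁻¹ * A)) l j = e s l * Y l j := by
      show ‖_‖ = _
      rw [h3, norm_mul]
      rfl
    rw [h4]
    ring
  -- global bound
  have hBu : ∀ i, B.mulVec u i ≤ u i - aF i := by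
    intro i
    have hsplit : B.mulVec u i = ∑ s, (cabs (P s)).mulVec u i := by
      rw [mulVecR_eq]
      have : ∀ j, B i j * u j = ∑ s, cabs (P s) i j * u j := by
        intro j
        rw [hBdef, Matrix.sum_apply, Finset.sum_mul]
      rw [Finset.sum_congr rfl fun j _ => this j, Finset.sum_comm]
      exact Finset.sum_congr rfl fun s _ => (mulVecR_eq _ _ _).symm
    rw [hsplit]
    have h5 : ∑ s, (cabs (P s)).mulVec u i
        ≤ ∑ s, X.mulVec (fun l => e s l * Y.mulVec u l) i :=
      Finset.sum_le_sum fun s _ => hstep s i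
    have h6 : ∑ s, X.mulVec (fun l => e s l * Y.mulVec u l) i
        = X.mulVec (Y.mulVec u) i := by
      have : ∀ s, X.mulVec (fun l => e s l * Y.mulVec u l) i
          = ∑ l, X i l * (e s l * Y.mulVec u l) := fun s => mulVecR_eq _ _ _
      rw [Finset.sum_congr rfl fun s _ => this s, Finset.sum_comm, mulVecR_eq]
      refine Finset.sum_congr rfl fun l _ => ?_
      have h61 : ∑ s, X i l * (e s l * Y.mulVec u l)
          = (∑ s, e s l) * (X i l * Y.mulVec u l) := by
        rw [Finset.sum_mul]
        exact Finset.sum_congr rfl fun s _ => by ring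
      rw [h61, he_sum l, one_mul]
    have h7 : X.mulVec (Y.mulVec u) i ≤ X.mulVec (fun l => u l - aM l) i :=
      mulVec_mono_s7 X (fun i j => hcabs_nonneg _ i j) _ _ (fun l => hMbound l) i
    have h8 : X.mulVec (fun l => u l - aM l) i = X.mulVec u i - X.mulVec aM i := by
      have : (fun l => u l - aM l) = u - aM := rfl
      rw [this, Matrix.mulVec_sub]
      rfl
    have h9 : 0 ≤ X.mulVec aM i :=
      mulVec_nonneg X (fun i j => hcabs_nonneg _ i j) aM (fun l => (haM l).le) i
    have h10 := hFbound i
    calc ∑ s, (cabs (P s)).mulVec u i ≤ X.mulVec (Y.mulVec u) i := le_of_le_of_eq h5 h6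
      _ ≤ X.mulVec u i - X.mulVec aM i := le_of_le_of_eq h7 h8
      _ ≤ u i - aF i := by linarith
  -- spectral radius bound
  set r : ℝ := Finset.univ.sup' Finset.univ_nonempty (fun i => B.mulVec u i / u i) with hrdef
  have hBu_nonneg : ∀ i, 0 ≤ B.mulVec u i :=
    fun i => mulVec_nonneg B hB0 u (fun l => (hu l).le) i
  have hr0 : 0 ≤ r := by
    obtain ⟨i0⟩ := (inferInstance : Nonempty (Fin n))
    exact le_trans (div_nonneg (hBu_nonneg i0) (hu i0).le)
      (Finset.le_sup' (f := fun i => B.mulVec u i / u i) (Finset.mem_univ i0))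
  have hr1 : r < 1 := by
    rw [hrdef, Finset.sup'_lt_iff]
    intro i _
    rw [div_lt_one (hu i)]
    have := haF i
    linarith [hBu i]
  have hBur : ∀ i, B.mulVec u i ≤ r * u i := by
    intro i
    have := Finset.le_sup' (f := fun i => B.mulVec u i / u i) (Finset.mem_univ i)
    calc B.mulVec u i = B.mulVec u i / u i * u i := by field_simp [(hu i).ne']
      _ ≤ r * u i := mul_le_mul_of_nonneg_right this (hu i).le
  exact lt_of_le_of_lt (specRad_le_s7 B hB0 u hu r hr0 hBur) hr1
end
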